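/- The determinant of the (m+1)×(m+1) matrix whose first m rows are (row i has 1 in column i, -λ_i in column i+1, zeros elsewhere) and whose last row is (E_m, E_{m-1}, ..., E_1, 1), where E_k is the k-th elementary symmetric polynomial in λ_1,...,λ_m, equals 1 + λ_m E_1 + λ_{m-1}λ_m E_2 + ... + λ_1λ_2⋯λ_m E_m. -/

import Mathlib

open Finset

/-- The `k`-th elementary symmetric function of `l 0, ..., l (m-1)`. -/
def esymmVal (m : ℕ) (l : Fin m → ℝ) (k : ℕ) : ℝ :=
  ∑ s ∈ Finset.powersetCard k (Finset.univ : Finset (Fin m)), ∏ i ∈ s, l i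

/-- The product of the top `k` values `l (m-k) ⋯ l (m-1)`. -/
def topProd (m : ℕ) (l : Fin m → ℝ) (k : ℕ) : ℝ :=
  ∏ i ∈ Finset.univ.filter (fun i : Fin m => m - k ≤ (i : ℕ)), l i

def auxM (m : ℕ) (l : Fin m → ℝ) (b : Fin (m+1) → ℝ) : Matrix (Fin (m+1)) (Fin (m+1)) ℝ :=
  Matrix.of fun i j =>
    if h : (i : ℕ) < m then
      (if (j : ℕ) = (i : ℕ) then (1:ℝ) else if (j:ℕ) = (i:ℕ)+1 then -l ⟨i,h⟩ else 0)
    else b j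

lemma auxM_det (m : ℕ) (l : Fin m → ℝ) (b : Fin (m+1) → ℝ) :
    (auxM m l b).det = ∑ j : Fin (m+1), b j * ∏ i : Fin m, if (j:ℕ) ≤ (i:ℕ) then l i else 1 := by
  induction m with
  | zero =>
      simp [auxM, Matrix.det_fin_one]
  | succ m ih =>
      rw [Matrix.det_succ_column_zero]
      have hsplit : ∀ i : Fin (m+2),
          (-1:ℝ) ^ (i:ℕ) * (auxM (m+1) l b) i 0 *
            (((auxM (m+1) l b).submatrix i.succAbove Fin.succ).det) =
          (if i = 0 then ((auxM (m+1) l b).submatrix (Fin.succ) Fin.succ).det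
           else if i = Fin.last (m+1) then
             (-1:ℝ)^(m+1) * b 0 * (((auxM (m+1) l b).submatrix (Fin.last (m+1)).succAbove Fin.succ).det)
           else 0) := by
        intro i
        rcases eq_or_ne i 0 with rfl | h0
        · simp [auxM, Fin.succAbove]
        · rcases eq_or_ne i (Fin.last (m+1)) with rfl | hl
          · simp [auxM, if_neg h0]
          · have hi : (i:ℕ) < m + 1 := by
              have := Fin.lt_last_iff_ne_last.mpr hl
              exact Nat.lt_of_lt_of_le (Fin.lt_iff_val_lt_val.mp this) (le_refl _)
            have hi0 : (0:ℕ) ≠ (i:ℕ) := by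
              intro h; exact h0 (Fin.ext h.symm)
            simp only [auxM, Matrix.of_apply, hi, dif_pos, Fin.val_zero, if_neg h0, if_neg hl]
            simp only [hi0, show (0:ℕ) ≠ (i:ℕ)+1 by omega, if_false, ↓reduceIte]
            ring
      rw [Finset.sum_congr rfl (fun i _ => hsplit i)]
      have h0ne : (0 : Fin (m+2)) ≠ Fin.last (m+1) := by
        intro h; have := congrArg Fin.val h; simp [Fin.last] at this
      rw [← Finset.sum_subset (Finset.subset_univ ({0, Fin.last (m+1)} : Finset (Fin (m+2))))
        (by intro i _ hi; simp at hi; rw [if_neg hi.1, if_neg hi.2])]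
      rw [Finset.sum_insert (by simp [h0ne]), Finset.sum_singleton,
        if_pos rfl, if_neg h0ne.symm, if_pos rfl]
      -- compute the two minors
      have hX : (auxM (m+1) l b).submatrix Fin.succ Fin.succ
          = auxM m (fun i => l i.succ) (fun j => b j.succ) := by
        ext r c
        simp only [Matrix.submatrix_apply, auxM, Matrix.of_apply, Fin.val_succ]
        by_cases h : (r:ℕ) < m
        · rw [dif_pos (by omega), dif_pos h]
          by_cases hc : (c:ℕ) = (r:ℕ)
          · rw [if_pos (by omega), if_pos hc]
          · rw [if_neg (by omega), if_neg hc]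
            by_cases hc2 : (c:ℕ) = (r:ℕ)+1
            · rw [if_pos (by omega), if_pos hc2]; rfl
            · rw [if_neg (by omega), if_neg hc2]
        · rw [dif_neg (by omega), dif_neg h]
      have hY : (((auxM (m+1) l b).submatrix (Fin.last (m+1)).succAbove Fin.succ)).det
          = (-1:ℝ)^(m+1) * ∏ i : Fin (m+1), l i := by
        have htri : ((auxM (m+1) l b).submatrix (Fin.last (m+1)).succAbove Fin.succ).BlockTriangular
            (OrderDual.toDual) := by
          intro r c h
          have hrc : (r:ℕ) < (c:ℕ) := h
          simp only [Matrix.submatrix_apply, auxM, Matrix.of_apply, Fin.succAbove_last,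
            Fin.coe_castSucc, Fin.val_succ]
          rw [dif_pos (by omega), if_neg (by omega), if_neg (by omega)]
        rw [Matrix.det_of_lowerTriangular _ htri]
        have : ∀ r : Fin (m+1),
            ((auxM (m+1) l b).submatrix (Fin.last (m+1)).succAbove Fin.succ) r r = -l r := by
          intro r
          simp only [Matrix.submatrix_apply, auxM, Matrix.of_apply, Fin.succAbove_last,
            Fin.coe_castSucc, Fin.val_succ]
          rw [dif_pos (by omega), if_neg (by omega)]
          simp
        rw [Finset.prod_congr rfl (fun r _ => this r)]
        rw [Finset.prod_congr rfl (fun r _ => (neg_eq_neg_one_mul (l r))),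
          Finset.prod_mul_distrib]
        simp
      rw [hX, hY, ih]
      rw [Fin.sum_univ_succ (fun j : Fin (m+2) => b j * ∏ i : Fin (m+1), if (j:ℕ) ≤ (i:ℕ) then l i else 1)]
      have hP0 : (∏ i : Fin (m+1), if ((0:Fin (m+2)):ℕ) ≤ (i:ℕ) then l i else 1)
          = ∏ i : Fin (m+1), l i := by
        apply Finset.prod_congr rfl; intro i _; rw [if_pos (by simp)]
      have hPs : ∀ j : Fin (m+1),
          (∏ i : Fin (m+1), if ((j.succ:Fin (m+2)):ℕ) ≤ (i:ℕ) then l i else 1)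
          = ∏ i : Fin m, if (j:ℕ) ≤ (i:ℕ) then l i.succ else 1 := by
        intro j
        rw [Fin.prod_univ_succ]
        rw [if_neg (by simp [Fin.val_succ])]
        rw [one_mul]
        apply Finset.prod_congr rfl; intro i _
        simp only [Fin.val_succ]
        by_cases h : (j:ℕ) ≤ (i:ℕ)
        · rw [if_pos (by omega), if_pos h]
        · rw [if_neg (by omega), if_neg h]
      rw [hP0]
      have hpow : ((-1:ℝ))^(m+1) * (-1:ℝ)^(m+1) = 1 := by
        rw [← pow_add]; exact Even.neg_one_pow ⟨m+1, by ring⟩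
      have hsum : (∑ j : Fin (m+1), b j.succ * ∏ i : Fin (m+1),
            if ((j.succ : Fin (m+2)):ℕ) ≤ (i:ℕ) then l i else 1)
          = ∑ j : Fin (m+1), b j.succ * ∏ i : Fin m, if (j:ℕ) ≤ (i:ℕ) then l i.succ else 1 :=
        Finset.sum_congr rfl (fun j _ => by rw [hPs j])
      rw [hsum, show ((-1:ℝ))^(m+1) * b 0 * ((-1:ℝ)^(m+1) * ∏ i : Fin (m+1), l i)
          = b 0 * ∏ i : Fin (m+1), l i from by rw [mul_mul_mul_comm, hpow, one_mul]]
      ring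

theorem stmt0 (m : ℕ) (l : Fin m → ℝ) :
    (Matrix.of fun i j : Fin (m + 1) =>
        if h : (i : ℕ) < m then
          (if (j : ℕ) = (i : ℕ) then (1 : ℝ)
           else if (j : ℕ) = (i : ℕ) + 1 then -l ⟨i, h⟩ else 0)
        else esymmVal m l (m - (j : ℕ))).det
      = ∑ k ∈ Finset.range (m + 1), topProd m l k * esymmVal m l k := by
  have h1 : (Matrix.of fun i j : Fin (m + 1) =>
        if h : (i : ℕ) < m then
          (if (j : ℕ) = (i : ℕ) then (1 : ℝ)
           else if (j : ℕ) = (i : ℕ) + 1 then -l ⟨i, h⟩ else 0)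
        else esymmVal m l (m - (j : ℕ))) = auxM m l (fun j => esymmVal m l (m - (j:ℕ))) := rfl
  rw [h1, auxM_det]
  have h2 : ∀ j : Fin (m+1),
      (∏ i : Fin m, if (j:ℕ) ≤ (i:ℕ) then l i else 1) = topProd m l (m - (j:ℕ)) := by
    intro j
    rw [topProd, ← Finset.prod_filter]
    apply Finset.prod_congr _ (fun _ _ => rfl)
    apply Finset.filter_congr
    intro i _
    have hj : (j:ℕ) ≤ m := Nat.lt_succ_iff.mp j.isLt
    simp only [Nat.sub_sub_self hj]
  have h3 : (∑ j : Fin (m+1), esymmVal m l (m - (j:ℕ)) * ∏ i : Fin m, if (j:ℕ) ≤ (i:ℕ) then l i else 1)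
      = ∑ j : Fin (m+1), topProd m l (m - (j:ℕ)) * esymmVal m l (m - (j:ℕ)) :=
    Finset.sum_congr rfl (fun j _ => by rw [h2 j]; ring)
  rw [h3, Fin.sum_univ_eq_sum_range (fun j => topProd m l (m - j) * esymmVal m l (m - j)) (m+1)]
  have h4 := Finset.sum_range_reflect (fun k => topProd m l k * esymmVal m l k) (m+1)
  simp only [Nat.add_sub_cancel] at h4
  exact h4
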